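/- Let b > 0, V_R < V_F, a > 0. Suppose n : ℝ → [0,∞) is defined by n(v) = (1/b)𝟙_{V_R ≤ v ≤ V_F} for v ≤ V_F and n(v) = (1/b)e^{−(v−V_F)/(bM)} for v > V_F, where M = 1 − (V_F − V_R)/b > 0 (requiring b > V_F − V_R). Then n ≥ 0, ∫_ℝ n(v) dv = 1, and ∫_{V_F}^∞ n(v) dv = M. -/

import Mathlib

open MeasureTheory

open Set Real in
lemma exp_tail_integral {c A : ℝ} (hc : 0 < c) :
    ∫ v in Ioi A, Real.exp (-(v - A) / c) = c := by
  have h1 : ∀ v : ℝ, Real.exp (-(v - A) / c) =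
      Real.exp (A / c) * Real.exp (-(v * c⁻¹)) := by
    intro v
    rw [← Real.exp_add]
    ring_nf
  simp_rw [h1]
  rw [integral_const_mul]
  have h2 : (∫ v in Ioi A, Real.exp (-(v * c⁻¹)))
      = (c⁻¹)⁻¹ • ∫ x in Ioi (A * c⁻¹), Real.exp (-x) :=
    integral_comp_mul_right_Ioi (fun x => Real.exp (-x)) A (inv_pos.mpr hc)
  rw [h2, integral_exp_neg_Ioi, inv_inv, smul_eq_mul]
  rw [mul_comm c, ← mul_assoc, ← Real.exp_add]
  have : A / c + -(A * c⁻¹) = 0 := by field_simp; ring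
  rw [this, Real.exp_zero, one_mul]

open Set Real in
lemma exp_tail_integrable {c A : ℝ} (hc : 0 < c) :
    IntegrableOn (fun v => Real.exp (-(v - A) / c)) (Ioi A) := by
  have h1 : ∀ v : ℝ, Real.exp (-(v - A) / c) =
      Real.exp (A / c) * Real.exp (-(c⁻¹ * v)) := by
    intro v
    rw [← Real.exp_add]
    ring_nf
  simp_rw [h1]
  simpa [neg_mul, IntegrableOn] using Integrable.const_mul (exp_neg_integrableOn_Ioi A (inv_pos.mpr hc)) (Real.exp (A / c))

theorem eternal_blowup_profile (b VR VF M : ℝ) (hb : 0 < b) (hRF : VR < VF)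
    (hM : M = 1 - (VF - VR) / b) (hMpos : 0 < M)
    (n : ℝ → ℝ)
    (hn : ∀ v, n v = if v ≤ VF then (if VR ≤ v then 1 / b else 0)
        else (1 / b) * Real.exp (-(v - VF) / (b * M))) :
    (∀ v, 0 ≤ n v) ∧ (∫ v : ℝ, n v = 1) ∧ (∫ v in Set.Ioi VF, n v = M) := by
  have hbM : 0 < b * M := mul_pos hb hMpos
  -- nonnegativity
  have hnonneg : ∀ v, 0 ≤ n v := by
    intro v
    rw [hn v]
    split_ifs with h1 h2
    · positivity
    · exact le_refl 0
    · positivity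
  -- tail integral
  have htail_eq : ∀ v ∈ Set.Ioi VF, n v = (1 / b) * Real.exp (-(v - VF) / (b * M)) := by
    intro v hv
    rw [hn v, if_neg (not_le.mpr hv)]
  have htail : ∫ v in Set.Ioi VF, n v = M := by
    rw [setIntegral_congr_fun measurableSet_Ioi htail_eq, integral_const_mul,
      exp_tail_integral hbM]
    field_simp
  have htail_int : IntegrableOn n (Set.Ioi VF) := by
    rw [integrableOn_congr_fun htail_eq measurableSet_Ioi]
    exact (exp_tail_integrable hbM).const_mul _
  -- left part
  have hleft_eq : ∀ v ∈ Set.Iic VF, n v = Set.indicator (Set.Icc VR VF) (fun _ => 1 / b) v := by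
    intro v hv
    rw [hn v, if_pos (Set.mem_Iic.mp hv), Set.indicator_apply]
    by_cases h : VR ≤ v
    · rw [if_pos h, if_pos ⟨h, hv⟩]
    · rw [if_neg h, if_neg (fun hc => h hc.1)]
  have hleft : ∫ v in Set.Iic VF, n v = (VF - VR) / b := by
    rw [setIntegral_congr_fun measurableSet_Iic hleft_eq]
    have : IntegrableOn (Set.indicator (Set.Icc VR VF) (fun _ => 1 / b)) (Set.Iic VF) := by
      apply (integrable_indicator_iff measurableSet_Icc).mpr
      apply IntegrableOn.restrict
      exact (integrableOn_const_iff).mpr (Or.inr measure_Icc_lt_top)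
    rw [integral_indicator measurableSet_Icc]
    have hsub : Set.Icc VR VF ∩ Set.Iic VF = Set.Icc VR VF := by
      ext x; simp (config := {contextual := true}) [Set.mem_Icc, and_assoc]
    rw [Measure.restrict_restrict measurableSet_Icc, hsub,
      setIntegral_const, measureReal_def, Real.volume_Icc, smul_eq_mul,
      ENNReal.toReal_ofReal (by linarith)]
    ring
  have hleft_int : IntegrableOn n (Set.Iic VF) := by
    rw [integrableOn_congr_fun hleft_eq measurableSet_Iic]
    apply (integrable_indicator_iff measurableSet_Icc).mpr
    apply IntegrableOn.restrict
    exact (integrableOn_const_iff).mpr (Or.inr measure_Icc_lt_top)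
  have htotal : ∫ v : ℝ, n v = 1 := by
    rw [← intervalIntegral.integral_Iic_add_Ioi hleft_int htail_int, hleft, htail]
    rw [hM]; ring
  exact ⟨hnonneg, htotal, htail⟩
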